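/- For all α > 0, r ∈ (0,1), and n ∈ ℕ satisfying 1/(α r n^r) + α r / n^{1-r} ≤ 1/14, the following holds: ∑_{k=1}^∞ ∑_{v=(2k+1)n-k}^∞ e^{-α v^r} < (636/169) · (n^{1-r}/(α r)) · e^{-α (3n-1)^r}. -/

import Mathlib

open Real

lemma num_aux {x : ℝ} (hx0 : 0 < x) (hx14 : x ≤ 1 / 14) :
    (1 + x / 14) * (1 - 195 / 196 * x + (195 / 196 * x) ^ 2) ≤ 1 - 5 / 6 * x := by
  nlinarith [sq_nonneg x, mul_pos hx0 hx0, sq_nonneg (x - 1/14),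
    mul_nonneg (mul_nonneg hx0.le hx0.le) hx0.le]

/-- Auxiliary function: `g w = w^(1-r)/(αr) * exp(-(α w^r))`. -/
noncomputable def gAux (α r w : ℝ) : ℝ := w ^ (1 - r) / (α * r) * Real.exp (-(α * w ^ r))

lemma gAux_nonneg {α r : ℝ} (hα : 0 < α) (hr0 : 0 < r) (w : ℝ) (hw : 0 ≤ w) :
    0 ≤ gAux α r w := by
  unfold gAux
  positivity

lemma key_term {α r : ℝ} (hα : 0 < α) (hr0 : 0 < r) (hr1 : r < 1) {w : ℝ} (hw1 : 1 ≤ w)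
    (hx14 : α * r * w ^ (r - 1) ≤ 1 / 14) (h14 : 14 ≤ α * r * w ^ r) :
    Real.exp (-(α * w ^ r)) ≤ 6 / 5 * (gAux α r w - gAux α r (w + 1)) := by
  have hβ0 : 0 < α * r := mul_pos hα hr0
  have hw0 : 0 < w := lt_of_lt_of_le one_pos hw1
  have hw10 : 0 < w + 1 := by linarith
  set β := α * r with hβdef
  clear_value β
  set x := β * w ^ (r - 1) with hxdef
  clear_value x
  have hwr0 : 0 < w ^ r := rpow_pos_of_pos hw0 r
  have hx0 : 0 < x := hxdef ▸ mul_pos hβ0 (rpow_pos_of_pos hw0 _)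
  have hrw : w ^ (r - 1) * w = w ^ r := by
    rw [← Real.rpow_add_one hw0.ne' (r - 1)]; norm_num
  have hxw : x * w = β * w ^ r := by
    rw [hxdef, mul_assoc, hrw]
  have hx14' : x ≤ 1 / 14 := hx14
  have hinvw : 1 / w ≤ x / 14 := by
    rw [div_le_div_iff₀ hw0 (by norm_num : (0:ℝ) < 14)]
    calc (1:ℝ) * 14 = 14 := by ring
    _ ≤ β * w ^ r := h14
    _ = x * w := hxw.symm
  -- Step A : α * ((w+1)^r - w^r) ≥ x * (1 - x/14)
  have hfr : (w / (w + 1)) ^ r ≤ 1 - r * (1 / (w + 1)) := by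
    have hs : (-1 : ℝ) ≤ -(1 / (w + 1)) := by
      have : 1 / (w + 1) ≤ 1 := by
        rw [div_le_one hw10]; linarith
      linarith
    have := rpow_one_add_le_one_add_mul_self hs hr0.le hr1.le
    have he : (1 : ℝ) + -(1 / (w + 1)) = w / (w + 1) := by
      field_simp
      ring
    rw [he] at this
    linarith [this]
  have hPw : w ^ r ≤ (w + 1) ^ r := by
    apply rpow_le_rpow hw0.le (by linarith) hr0.le
  have hdivr : (w / (w + 1)) ^ r = w ^ r / (w + 1) ^ r := by
    rw [Real.div_rpow hw0.le hw10.le]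
  have hwr_le : w ^ r ≤ (w + 1) ^ r * (1 - r * (1 / (w + 1))) := by
    have h1 : w ^ r / (w + 1) ^ r ≤ 1 - r * (1 / (w + 1)) := by
      rw [← hdivr]; exact hfr
    have h2 := mul_le_mul_of_nonneg_left h1 (rpow_pos_of_pos hw10 r).le
    rw [mul_div_cancel₀] at h2
    · linarith [h2]
    · exact (rpow_pos_of_pos hw10 r).ne'
  have hDelta1 : β * w ^ r / (w + 1) ≤ α * ((w + 1) ^ r - w ^ r) := by
    have h3 : (w + 1) ^ r * (r * (1 / (w + 1))) ≤ (w + 1) ^ r - w ^ r := by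
      nlinarith [hwr_le]
    have h4 : w ^ r * (r * (1 / (w + 1))) ≤ (w + 1) ^ r * (r * (1 / (w + 1))) := by
      apply mul_le_mul_of_nonneg_right hPw
      positivity
    have h5 : w ^ r * (r * (1 / (w + 1))) ≤ (w + 1) ^ r - w ^ r := le_trans h4 h3
    have h6 := mul_le_mul_of_nonneg_left h5 hα.le
    calc β * w ^ r / (w + 1) = α * (w ^ r * (r * (1 / (w + 1)))) := by
          rw [hβdef]; field_simp
    _ ≤ α * ((w + 1) ^ r - w ^ r) := h6
  have hDelta : x * (1 - x / 14) ≤ α * ((w + 1) ^ r - w ^ r) := by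
    refine le_trans ?_ hDelta1
    have h7 : x * (w / (w + 1)) = β * w ^ r / (w + 1) := by
      rw [← hxw]; field_simp
    rw [← h7]
    apply mul_le_mul_of_nonneg_left _ hx0.le
    have h8 : 1 - 1 / w ≤ w / (w + 1) := by
      rw [le_div_iff₀ hw10]
      have hwne := hw0.ne'
      field_simp
      nlinarith
    linarith
  -- Step B : exp bound
  set t := (195 / 196 : ℝ) * x with htdef
  clear_value t
  have ht0 : 0 < t := by rw [htdef]; positivity
  have htle : t ≤ x * (1 - x / 14) := by
    rw [htdef]
    have : 195 / 196 ≤ 1 - x / 14 := by linarith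
    nlinarith
  have hexpQ : Real.exp (-(α * ((w + 1) ^ r - w ^ r))) ≤ 1 - t + t ^ 2 := by
    have h1 : Real.exp (-(α * ((w + 1) ^ r - w ^ r))) ≤ Real.exp (-t) :=
      Real.exp_le_exp.2 (by linarith [le_trans htle hDelta])
    have h2 : Real.exp (-t) ≤ 1 / (1 + t) := by
      rw [Real.exp_neg, one_div]
      exact inv_anti₀ (by linarith) (by linarith [Real.add_one_le_exp t])
    have h3 : 1 / (1 + t) ≤ 1 - t + t ^ 2 := by
      rw [div_le_iff₀ (by linarith : (0:ℝ) < 1 + t)]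
      nlinarith [pow_nonneg ht0.le 3]
    exact le_trans h1 (le_trans h2 h3)
  -- assembly
  set D := Real.exp (-(α * ((w + 1) ^ r - w ^ r))) with hDdef
  clear_value D
  have hD0 : 0 ≤ D := hDdef ▸ (Real.exp_pos _).le
  set E := Real.exp (-(α * w ^ r)) with hEdef
  clear_value E
  have hE0 : 0 < E := hEdef ▸ Real.exp_pos _
  have hfact : (w + 1) ^ (1 - r) = w ^ (1 - r) * (1 + 1 / w) ^ (1 - r) := by
    rw [← Real.mul_rpow hw0.le (by positivity : (0:ℝ) ≤ 1 + 1 / w)]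
    congr 1
    field_simp
  have hone : (1 + 1 / w) ^ (1 - r) ≤ 1 + x / 14 := by
    have h1 : (1 + 1 / w) ^ (1 - r) ≤ (1 + 1 / w) ^ (1 : ℝ) := by
      apply rpow_le_rpow_of_exponent_le (le_add_of_nonneg_right (by positivity)) (by linarith)
    rw [Real.rpow_one] at h1
    linarith
  have hX : x * w ^ (1 - r) = β := by
    rw [hxdef, mul_assoc, ← Real.rpow_add hw0]
    norm_num
  have hEsplit : Real.exp (-(α * (w + 1) ^ r)) = E * D := by
    rw [hEdef, hDdef, ← Real.exp_add]
    congr 1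
    ring
  have hQle : (1 + 1 / w) ^ (1 - r) * D ≤ (1 + x / 14) * (1 - t + t ^ 2) :=
    mul_le_mul hone hexpQ hD0 (by positivity)
  have hkey : x ≤ 6 / 5 * (1 - (1 + 1 / w) ^ (1 - r) * D) := by
    have h9 : (1 + x / 14) * (1 - t + t ^ 2) ≤ 1 - 5 / 6 * x := by
      rw [htdef]
      exact num_aux hx0 hx14'
    linarith [hQle]
  have hgd : gAux α r w - gAux α r (w + 1) =
      E / x * (1 - (1 + 1 / w) ^ (1 - r) * D) := by
    have hX1 : w ^ (1 - r) ≠ 0 := (rpow_pos_of_pos hw0 _).ne'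
    have hinv : w ^ (1 - r) / β = 1 / x := by
      rw [← hX, mul_comm, div_mul_eq_div_div, div_self hX1]
    unfold gAux
    rw [← hβdef, hEsplit, hfact, ← hEdef, mul_div_right_comm, hinv]
    ring
  rw [hgd]
  calc E = E / x * x := by field_simp
  _ ≤ E / x * (6 / 5 * (1 - (1 + 1 / w) ^ (1 - r) * D)) := by
      apply mul_le_mul_of_nonneg_left hkey (by positivity)
  _ = 6 / 5 * (E / x * (1 - (1 + 1 / w) ^ (1 - r) * D)) := by ring

lemma inner_tail (α r : ℝ) (hα : 0 < α) (hr0 : 0 < r) (hr1 : r < 1)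
    (n m : ℕ) (hn : 1 ≤ n) (hm : n ≤ m)
    (hc1 : α * r / (n : ℝ) ^ (1 - r) ≤ 1 / 14) (hc2 : 14 ≤ α * r * (n : ℝ) ^ r) :
    ∑' v : ℕ, Real.exp (-(α * ((m + v : ℕ) : ℝ) ^ r)) ≤ 6 / 5 * gAux α r m := by
  have hn0 : (0:ℝ) < n := by exact_mod_cast hn
  have hterm : ∀ v : ℕ, Real.exp (-(α * ((m + v : ℕ) : ℝ) ^ r)) ≤
      6 / 5 * (gAux α r ((m + v : ℕ) : ℝ) - gAux α r (((m + v : ℕ) : ℝ) + 1)) := by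
    intro v
    have hmv1 : 1 ≤ m + v := le_trans hn (le_trans hm (Nat.le_add_right m v))
    have hw1 : (1:ℝ) ≤ ((m + v : ℕ) : ℝ) := by exact_mod_cast hmv1
    have hwn : (n:ℝ) ≤ ((m + v : ℕ) : ℝ) := by
      exact_mod_cast le_trans hm (Nat.le_add_right m v)
    apply key_term hα hr0 hr1 hw1
    · have h1 : ((m + v : ℕ) : ℝ) ^ (r - 1) ≤ (n:ℝ) ^ (r - 1) := by
        rw [show r - 1 = -(1 - r) by ring, Real.rpow_neg hn0.le,
          Real.rpow_neg (by positivity : (0:ℝ) ≤ ((m + v : ℕ) : ℝ))]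
        exact inv_anti₀ (rpow_pos_of_pos hn0 _)
          (rpow_le_rpow hn0.le hwn (by linarith))
      have h2 : α * r * (n:ℝ) ^ (r - 1) = α * r / (n:ℝ) ^ (1 - r) := by
        rw [show r - 1 = -(1 - r) by ring, Real.rpow_neg hn0.le, div_eq_mul_inv]
      calc α * r * ((m + v : ℕ) : ℝ) ^ (r - 1) ≤ α * r * (n:ℝ) ^ (r - 1) := by
            apply mul_le_mul_of_nonneg_left h1 (by positivity)
        _ = α * r / (n:ℝ) ^ (1 - r) := h2
        _ ≤ 1 / 14 := hc1
    · calc (14:ℝ) ≤ α * r * (n:ℝ) ^ r := hc2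
        _ ≤ α * r * ((m + v : ℕ) : ℝ) ^ r := by
            apply mul_le_mul_of_nonneg_left (rpow_le_rpow hn0.le hwn hr0.le) (by positivity)
  apply Real.tsum_le_of_sum_range_le (fun v => (Real.exp_pos _).le)
  intro N
  have hcast : ∀ v : ℕ, ((m + v : ℕ) : ℝ) + 1 = ((m + (v + 1) : ℕ) : ℝ) := by
    intro v; push_cast; ring
  calc ∑ v ∈ Finset.range N, Real.exp (-(α * ((m + v : ℕ) : ℝ) ^ r))
      ≤ ∑ v ∈ Finset.range N,
        (6 / 5 * (gAux α r ((m + v : ℕ) : ℝ) - gAux α r ((m + (v + 1) : ℕ) : ℝ))) := by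
        refine Finset.sum_le_sum fun v _ => ?_
        rw [← hcast v]
        exact hterm v
    _ = 6 / 5 * (gAux α r ((m + 0 : ℕ) : ℝ) - gAux α r ((m + N : ℕ) : ℝ)) := by
        rw [← Finset.mul_sum, Finset.sum_range_sub' (fun v => gAux α r ((m + v : ℕ) : ℝ)) N]
    _ ≤ 6 / 5 * gAux α r m := by
        have h0 : ((m + 0 : ℕ) : ℝ) = (m:ℝ) := by norm_num
        have hnn := gAux_nonneg hα hr0 ((m + N : ℕ) : ℝ) (by positivity)
        rw [h0]
        linarith

lemma gAux_decay (α r : ℝ) (hα : 0 < α) (hr0 : 0 < r) (hr1 : r < 1) {a b : ℝ}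
    (ha2 : 1 ≤ a) (hab : a ≤ b) (h14 : 14 ≤ α * r * a ^ r) (k : ℕ)
    (hk : ((k:ℝ) + 2) * a ≤ 2 * b) :
    gAux α r b ≤ gAux α r a * (2 / ((k:ℝ) + 2)) ^ (13:ℕ) := by
  have hβ0 : 0 < α * r := mul_pos hα hr0
  have ha0 : 0 < a := lt_of_lt_of_le one_pos ha2
  have hb0 : 0 < b := lt_of_lt_of_le ha0 hab
  set ρ := b / a with hρdef
  have hρ1 : 1 ≤ ρ := (one_le_div ha0).2 hab
  have hρ0 : 0 < ρ := lt_of_lt_of_le one_pos hρ1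
  set L := Real.log ρ with hLdef
  have hL0 : 0 ≤ L := Real.log_nonneg hρ1
  have hba : b = a * ρ := by rw [hρdef]; field_simp
  have hbr : b ^ r = a ^ r * ρ ^ r := by
    rw [hba, Real.mul_rpow ha0.le hρ0.le]
  have hρr : 1 + r * L ≤ ρ ^ r := by
    rw [Real.rpow_def_of_pos hρ0, ← hLdef]
    linarith [Real.add_one_le_exp (L * r)]
  have h2 : α * a ^ r + 14 * L ≤ α * b ^ r := by
    have har : 0 < a ^ r := rpow_pos_of_pos ha0 r
    have e1 : α * a ^ r * (1 + r * L) ≤ α * b ^ r := by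
      rw [hbr]
      have := mul_le_mul_of_nonneg_left hρr (by positivity : (0:ℝ) ≤ α * a ^ r)
      nlinarith
    have e2 : 14 * L ≤ α * r * a ^ r * L := mul_le_mul_of_nonneg_right h14 hL0
    nlinarith
  have h3 : Real.exp (-(α * b ^ r)) ≤ Real.exp (-(α * a ^ r)) * (ρ⁻¹) ^ (14:ℕ) := by
    have e1 : Real.exp (-(α * b ^ r)) ≤ Real.exp (-(α * a ^ r) - 14 * L) :=
      Real.exp_le_exp.2 (by linarith)
    have e2 : Real.exp (-(α * a ^ r) - 14 * L) =
        Real.exp (-(α * a ^ r)) * (ρ⁻¹) ^ (14:ℕ) := by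
      rw [sub_eq_add_neg, Real.exp_add]
      congr 1
      rw [show -(14 * L) = (14:ℕ) * (-L) by push_cast; ring, Real.exp_nat_mul,
        Real.exp_neg, Real.exp_log hρ0]
    rw [e2] at e1
    exact e1
  have h4 : b ^ (1 - r) ≤ a ^ (1 - r) * ρ := by
    rw [hba, Real.mul_rpow ha0.le hρ0.le]
    have : ρ ^ (1 - r) ≤ ρ ^ (1:ℝ) := rpow_le_rpow_of_exponent_le hρ1 (by linarith)
    rw [Real.rpow_one] at this
    exact mul_le_mul_of_nonneg_left this (rpow_pos_of_pos ha0 _).le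
  have step1 : gAux α r b ≤ gAux α r a * (ρ * (ρ⁻¹) ^ (14:ℕ)) := by
    unfold gAux
    calc b ^ (1 - r) / (α * r) * Real.exp (-(α * b ^ r))
        ≤ a ^ (1 - r) * ρ / (α * r) * (Real.exp (-(α * a ^ r)) * (ρ⁻¹) ^ (14:ℕ)) := by
          apply mul_le_mul ((div_le_div_iff_of_pos_right hβ0).2 h4) h3 (Real.exp_pos _).le
            (by positivity)
      _ = a ^ (1 - r) / (α * r) * Real.exp (-(α * a ^ r)) * (ρ * (ρ⁻¹) ^ (14:ℕ)) := by
          ring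
  have hpow : ρ * (ρ⁻¹) ^ (14:ℕ) = (ρ⁻¹) ^ (13:ℕ) := by
    rw [pow_succ]
    field_simp
  rw [hpow] at step1
  refine le_trans step1 ?_
  apply mul_le_mul_of_nonneg_left _ (gAux_nonneg hα hr0 a ha0.le)
  apply pow_le_pow_left₀ (by positivity)
  rw [hρdef, inv_div]
  rw [div_le_div_iff₀ hb0 (by positivity : (0:ℝ) < (k:ℝ) + 2)]
  nlinarith

noncomputable def GAux : ℕ → ℝ
  | 0 => 1 + (2 / 3) ^ (11:ℕ)
  | (j+1) => (2 / 3) ^ (10:ℕ) * (4 / (((j:ℝ) + 2) * ((j:ℝ) + 3)))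

lemma GAux_nonneg (k : ℕ) : 0 ≤ GAux k := by
  cases k with
  | zero => unfold GAux; positivity
  | succ j => unfold GAux; positivity

lemma GAux_step (k : ℕ) : (2 / ((k:ℝ) + 2)) ^ (13:ℕ) ≤ GAux k - GAux (k+1) := by
  cases k with
  | zero =>
    simp only [GAux]
    norm_num
  | succ j =>
    have hj : (0:ℝ) ≤ (j:ℝ) := Nat.cast_nonneg j
    simp only [GAux]
    push_cast
    have e1 : (2 / ((j:ℝ) + 1 + 2)) ^ (13:ℕ) =
        (2 / ((j:ℝ) + 3)) ^ (10:ℕ) * (2 / ((j:ℝ) + 3)) ^ (3:ℕ) := by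
      rw [← pow_add]
      norm_num
      ring_nf
    have h2 : (2 / ((j:ℝ) + 3)) ^ (10:ℕ) ≤ ((2:ℝ)/3) ^ (10:ℕ) := by
      apply pow_le_pow_left₀ (by positivity)
      rw [div_le_div_iff₀ (by linarith) (by norm_num)]
      linarith
    have h3 : (2 / ((j:ℝ) + 3)) ^ (3:ℕ) ≤
        4 / (((j:ℝ) + 2) * ((j:ℝ) + 3)) - 4 / (((j:ℝ) + 1 + 2) * ((j:ℝ) + 1 + 3)) := by
      have heq : 4 / (((j:ℝ) + 2) * ((j:ℝ) + 3)) - 4 / (((j:ℝ) + 1 + 2) * ((j:ℝ) + 1 + 3))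
          = 8 / (((j:ℝ) + 2) * ((j:ℝ) + 3) * ((j:ℝ) + 4)) := by
        rw [div_sub_div _ _ (by positivity) (by positivity), div_eq_div_iff (by positivity) (by positivity)]
        ring
      rw [heq, div_pow, div_le_div_iff₀ (by positivity) (by positivity)]
      nlinarith [sq_nonneg ((j:ℝ) + 3), pow_pos (show (0:ℝ) < (j:ℝ) + 3 by linarith) 3]
    calc (2 / ((j:ℝ) + 1 + 2)) ^ (13:ℕ)
        = (2 / ((j:ℝ) + 3)) ^ (10:ℕ) * (2 / ((j:ℝ) + 3)) ^ (3:ℕ) := e1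
      _ ≤ ((2:ℝ)/3) ^ (10:ℕ) *
          (4 / (((j:ℝ) + 2) * ((j:ℝ) + 3)) - 4 / (((j:ℝ) + 1 + 2) * ((j:ℝ) + 1 + 3))) := by
          apply mul_le_mul h2 h3 (by positivity) (by positivity)
      _ = (2/3) ^ (10:ℕ) * (4 / (((j:ℝ) + 2) * ((j:ℝ) + 3))) -
          (2/3) ^ (10:ℕ) * (4 / (((j:ℝ) + 1 + 2) * ((j:ℝ) + 1 + 3))) := by ring

theorem double_tail_sum_bound (α r : ℝ) (hα : 0 < α) (hr0 : 0 < r) (hr1 : r < 1)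
    (n : ℕ) (hn : 1 ≤ n)
    (hcond : 1 / (α * r * (n : ℝ) ^ r) + α * r / (n : ℝ) ^ (1 - r) ≤ 1 / 14) :
    ∑' k : ℕ, ∑' v : ℕ,
        Real.exp (-α * ((((2 * (k + 1) + 1) * n - (k + 1) + v : ℕ) : ℝ)) ^ r)
      < 636 / 169 * ((n : ℝ) ^ (1 - r) / (α * r)) *
        Real.exp (-α * (((3 * n - 1 : ℕ) : ℝ)) ^ r) := by
  have hβ0 : 0 < α * r := mul_pos hα hr0
  have hn0 : (0:ℝ) < n := by exact_mod_cast hn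
  have hn1 : (1:ℝ) ≤ n := by exact_mod_cast hn
  have hnr : 0 < (n:ℝ) ^ r := rpow_pos_of_pos hn0 r
  have hc1 : α * r / (n:ℝ) ^ (1 - r) ≤ 1 / 14 := by
    have h0 : 0 ≤ 1 / (α * r * (n:ℝ) ^ r) := by positivity
    linarith
  have hc2 : 14 ≤ α * r * (n:ℝ) ^ r := by
    have h1 : 1 / (α * r * (n:ℝ) ^ r) ≤ 1 / 14 := by
      have h0 : 0 ≤ α * r / (n:ℝ) ^ (1 - r) := by positivity
      linarith
    rw [div_le_div_iff₀ (by positivity) (by norm_num)] at h1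
    linarith
  -- the value a = 3n - 1
  have h3n : 1 ≤ 3 * n := by omega
  set a : ℝ := ((3 * n - 1 : ℕ) : ℝ) with hadef
  have hacast : a = 3 * (n:ℝ) - 1 := by
    rw [hadef]
    push_cast [h3n]
    ring
  have ha2 : (2:ℝ) ≤ a := by rw [hacast]; linarith
  have han : (n:ℝ) ≤ a := by rw [hacast]; linarith
  have ha14 : 14 ≤ α * r * a ^ r :=
    le_trans hc2 (mul_le_mul_of_nonneg_left (rpow_le_rpow hn0.le han hr0.le) hβ0.le)
  have hga : 0 ≤ gAux α r a := gAux_nonneg hα hr0 a (by linarith)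
  -- per-k bound
  have houter : ∀ k : ℕ,
      (∑' v : ℕ, Real.exp (-α * ((((2 * (k + 1) + 1) * n - (k + 1) + v : ℕ) : ℝ)) ^ r))
      ≤ 6 / 5 * gAux α r a * (GAux k - GAux (k+1)) := by
    intro k
    have hkn : (k + 1) ≤ (2 * (k + 1) + 1) * n := by
      calc k + 1 ≤ (2 * (k + 1) + 1) * 1 := by omega
      _ ≤ (2 * (k + 1) + 1) * n := Nat.mul_le_mul_left _ hn
    have hMcast : (((2 * (k + 1) + 1) * n - (k + 1) : ℕ) : ℝ)
        = (2 * (k:ℝ) + 3) * n - ((k:ℝ) + 1) := by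
      push_cast [hkn]
      ring
    have hMn : (n : ℕ) ≤ (2 * (k + 1) + 1) * n - (k + 1) := by
      have h1 : k + 1 ≤ 2 * (k + 1) * n := by
        calc k + 1 ≤ 2 * (k + 1) * 1 := by omega
        _ ≤ 2 * (k + 1) * n := Nat.mul_le_mul_left _ hn
      have h2 : (2 * (k + 1) + 1) * n = 2 * (k + 1) * n + n := by ring
      omega
    have step1 := inner_tail α r hα hr0 hr1 n ((2 * (k + 1) + 1) * n - (k + 1)) hn hMn hc1 hc2
    have hb1 : (1:ℝ) ≤ (((2 * (k + 1) + 1) * n - (k + 1) : ℕ) : ℝ) := by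
      have : (1:ℕ) ≤ (2 * (k + 1) + 1) * n - (k + 1) := le_trans hn hMn
      exact_mod_cast this
    have hab : a ≤ (((2 * (k + 1) + 1) * n - (k + 1) : ℕ) : ℝ) := by
      rw [hacast, hMcast]
      have hk0 : (0:ℝ) ≤ (k:ℝ) := Nat.cast_nonneg k
      nlinarith
    have hk2 : ((k:ℝ) + 2) * a ≤ 2 * (((2 * (k + 1) + 1) * n - (k + 1) : ℕ) : ℝ) := by
      rw [hacast, hMcast]
      have hk0 : (0:ℝ) ≤ (k:ℝ) := Nat.cast_nonneg k
      nlinarith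
    have step2 := gAux_decay α r hα hr0 hr1 (by linarith : (1:ℝ) ≤ a) hab ha14 k hk2
    have step3 := GAux_step k
    calc ∑' v : ℕ, Real.exp (-α * ((((2 * (k + 1) + 1) * n - (k + 1) + v : ℕ) : ℝ)) ^ r)
        = ∑' v : ℕ, Real.exp (-(α * ((((2 * (k + 1) + 1) * n - (k + 1) + v : ℕ) : ℝ)) ^ r)) := by
          simp only [neg_mul]
      _ ≤ 6 / 5 * gAux α r (((2 * (k + 1) + 1) * n - (k + 1) : ℕ) : ℝ) := step1
      _ ≤ 6 / 5 * (gAux α r a * (2 / ((k:ℝ) + 2)) ^ (13:ℕ)) := by linarith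
      _ ≤ 6 / 5 * gAux α r a * (GAux k - GAux (k+1)) := by
          rw [← mul_assoc]
          apply mul_le_mul_of_nonneg_left step3 (by positivity)
  -- sum over k
  have hsum : ∑' k : ℕ, ∑' v : ℕ,
      Real.exp (-α * ((((2 * (k + 1) + 1) * n - (k + 1) + v : ℕ) : ℝ)) ^ r)
      ≤ 6 / 5 * gAux α r a * GAux 0 := by
    apply Real.tsum_le_of_sum_range_le
      (fun k => tsum_nonneg fun v => (Real.exp_pos _).le)
    intro N
    calc ∑ k ∈ Finset.range N, ∑' v : ℕ,
        Real.exp (-α * ((((2 * (k + 1) + 1) * n - (k + 1) + v : ℕ) : ℝ)) ^ r)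
        ≤ ∑ k ∈ Finset.range N, (6 / 5 * gAux α r a * (GAux k - GAux (k+1))) :=
          Finset.sum_le_sum fun k _ => houter k
      _ = 6 / 5 * gAux α r a * (GAux 0 - GAux N) := by
          rw [← Finset.mul_sum, Finset.sum_range_sub' GAux N]
      _ ≤ 6 / 5 * gAux α r a * GAux 0 := by
          have := GAux_nonneg N
          nlinarith [mul_nonneg (show (0:ℝ) ≤ 6/5 by norm_num) hga]
  refine lt_of_le_of_lt hsum ?_
  -- final numeric comparison
  have hE : Real.exp (-α * a ^ r) = Real.exp (-(α * a ^ r)) := by rw [neg_mul]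
  have hapow : a ^ (1 - r) ≤ 3 * (n:ℝ) ^ (1 - r) := by
    have h1 : a ≤ 3 * (n:ℝ) := by rw [hacast]; linarith
    have h2 : a ^ (1 - r) ≤ (3 * (n:ℝ)) ^ (1 - r) :=
      rpow_le_rpow (by linarith) h1 (by linarith)
    have h3 : (3 * (n:ℝ)) ^ (1 - r) = (3:ℝ) ^ (1 - r) * (n:ℝ) ^ (1 - r) :=
      Real.mul_rpow (by norm_num) hn0.le
    have h4 : (3:ℝ) ^ (1 - r) ≤ (3:ℝ) ^ (1:ℝ) :=
      rpow_le_rpow_of_exponent_le (by norm_num) (by linarith)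
    rw [Real.rpow_one] at h4
    have h5 : (3:ℝ) ^ (1 - r) * (n:ℝ) ^ (1 - r) ≤ 3 * (n:ℝ) ^ (1 - r) :=
      mul_le_mul_of_nonneg_right h4 (rpow_pos_of_pos hn0 _).le
    linarith [h2, h3 ▸ h2]
  have hEpos : 0 < Real.exp (-(α * a ^ r)) := Real.exp_pos _
  have hGAux0 : GAux 0 = 1 + (2/3) ^ (11:ℕ) := rfl
  unfold gAux
  rw [hGAux0, hE]
  have hfinal : (6:ℝ) / 5 * (1 + (2/3) ^ (11:ℕ)) * 3 < 636 / 169 := by norm_num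
  calc 6 / 5 * (a ^ (1 - r) / (α * r) * Real.exp (-(α * a ^ r))) * (1 + (2/3) ^ (11:ℕ))
      ≤ 6 / 5 * (3 * (n:ℝ) ^ (1 - r) / (α * r) * Real.exp (-(α * a ^ r))) * (1 + (2/3) ^ (11:ℕ)) := by
        apply mul_le_mul_of_nonneg_right _ (by positivity)
        apply mul_le_mul_of_nonneg_left _ (by norm_num)
        apply mul_le_mul_of_nonneg_right _ hEpos.le
        exact (div_le_div_iff_of_pos_right hβ0).2 hapow
      _ = (6 / 5 * (1 + (2/3) ^ (11:ℕ)) * 3) * ((n:ℝ) ^ (1 - r) / (α * r) * Real.exp (-(α * a ^ r))) := by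
        ring
      _ < 636 / 169 * ((n:ℝ) ^ (1 - r) / (α * r) * Real.exp (-(α * a ^ r))) := by
        apply mul_lt_mul_of_pos_right hfinal (by positivity)
      _ = 636 / 169 * ((n:ℝ) ^ (1 - r) / (α * r)) * Real.exp (-(α * a ^ r)) := by ring
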